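/- arXiv:1909.05109 — 2 statements merged into one kernel-verified Lean document; each statement's English description precedes it below -/
import Mathlib

section
/- Let (B_k) be a nonnegative process with B_0 ≤ γ a.s. and E[B_{k+1}|F_k] ≤ B_k/α̃ + β̃ a.s. for constants α̃ > 1, 0 ≤ β̃ < 1 with β̃α̃/(α̃−1) ≤ 1. Then P(max_{0≤k≤N} B_k ≥ 1) ≤ 1 − (1−γ)(1−β̃)^N. -/
open MeasureTheory ENNReal

/-- Kushner-type discrete-time bound, case `βα/(α-1) ≤ 1`. -/
theorem kushner_discrete_bound_case1
    {Ω : Type*} {m0 : MeasurableSpace Ω} (μ : Measure Ω) [IsProbabilityMeasure μ]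
    (ℱ : Filtration ℕ m0) (B : ℕ → Ω → ℝ)
    (hadp : Adapted ℱ B) (hint : ∀ k, Integrable (B k) μ)
    (hnn : ∀ k ω, 0 ≤ B k ω)
    (γ α β : ℝ) (hγ0 : 0 ≤ γ) (hγ1 : γ < 1)
    (hα : 1 < α) (hβ0 : 0 ≤ β) (hβ1 : β < 1)
    (hcase : β * α / (α - 1) ≤ 1)
    (h0 : ∀ᵐ ω ∂μ, B 0 ω ≤ γ)
    (hdrift : ∀ k, μ[B (k + 1) | ℱ k] ≤ᵐ[μ] fun ω => B k ω / α + β)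
    (N : ℕ) :
    μ {ω | ∃ k ≤ N, 1 ≤ B k ω} ≤ ENNReal.ofReal (1 - (1 - γ) * (1 - β) ^ N) := by
  have hα0 : 0 < α := lt_trans one_pos hα
  have hinv : 1 / α ≤ 1 - β := by
    have h1 : β * α ≤ α - 1 := by
      have := (div_le_one (by linarith : (0:ℝ) < α - 1)).mp hcase
      linarith
    rw [div_le_iff₀ hα0]
    nlinarith
  -- The "good" events
  set C : ℕ → Set Ω := fun n => {ω | ∀ k ≤ n, B k ω < 1} with hC
  have hCmeas : ∀ n, MeasurableSet[ℱ n] (C n) := by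
    intro n
    have : C n = ⋂ k ∈ Set.Iic n, {ω | B k ω < 1} := by
      ext ω; simp [hC, Set.mem_setOf_eq]
    rw [this]
    refine MeasurableSet.biInter (Set.to_countable _) fun k hk => ?_
    exact ℱ.mono hk _ ((hadp k) measurableSet_Iio)
  have hCm0 : ∀ n, MeasurableSet (C n) := fun n => ℱ.le n _ (hCmeas n)
  have hintN : ∀ n, Integrable (fun ω => 1 - B n ω) μ :=
    fun n => (integrable_const 1).sub (hint n)
  -- key induction
  have key : ∀ n, (1 - γ) * (1 - β) ^ n ≤ ∫ ω in C n, (1 - B n ω) ∂μ := by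
    intro n
    induction n with
    | zero =>
      have hfull : C 0 =ᵐ[μ] Set.univ := by
        filter_upwards [h0] with ω hω
        have hmem : ω ∈ C 0 := by
          intro k hk
          interval_cases k
          linarith
        exact propext ⟨fun _ => trivial, fun _ => hmem⟩
      rw [setIntegral_congr_set hfull]
      simp only [Measure.restrict_univ, pow_zero, mul_one]
      have : ∫ ω, (1 - B 0 ω) ∂μ = 1 - ∫ ω, B 0 ω ∂μ := by
        rw [integral_sub (integrable_const 1) (hint 0), integral_const]
        simp
      rw [this]
      have hB0 : ∫ ω, B 0 ω ∂μ ≤ γ := by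
        calc ∫ ω, B 0 ω ∂μ ≤ ∫ _, γ ∂μ := integral_mono_ae (hint 0) (integrable_const γ) h0
        _ = γ := by simp
      linarith
    | succ n ih =>
      have hsub : C (n + 1) ⊆ C n := fun ω hω k hk => hω k (le_trans hk (Nat.le_succ n))
      have hCsplit : C n = C (n + 1) ∪ (C n \ C (n + 1)) := by
        rw [Set.union_diff_cancel hsub]
      have step1 : ∫ ω in C n, (1 - B (n + 1) ω) ∂μ ≤ ∫ ω in C (n + 1), (1 - B (n + 1) ω) ∂μ := by
        conv_lhs => rw [hCsplit]
        rw [setIntegral_union disjoint_sdiff_self_right ((hCm0 n).diff (hCm0 (n + 1)))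
          ((hintN (n + 1)).integrableOn) ((hintN (n + 1)).integrableOn)]
        have : ∫ ω in C n \ C (n + 1), (1 - B (n + 1) ω) ∂μ ≤ 0 := by
          refine setIntegral_nonpos ((hCm0 n).diff (hCm0 (n + 1))) fun ω hω => ?_
          have h1 : ¬ (∀ k ≤ n + 1, B k ω < 1) := hω.2
          push_neg at h1
          obtain ⟨k, hk, hk1⟩ := h1
          have hkn : k = n + 1 := by
            by_contra hne
            exact absurd (hω.1 k (Nat.lt_succ_iff.mp (lt_of_le_of_ne hk hne))) (not_lt.mpr hk1)
          subst hkn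
          linarith
        linarith
      have step2 : ∫ ω in C n, (1 - (μ[B (n + 1) | ℱ n]) ω) ∂μ
          = ∫ ω in C n, (1 - B (n + 1) ω) ∂μ := by
        rw [integral_sub (integrable_const 1) integrable_condExp.integrableOn,
          integral_sub (integrable_const 1) (hint (n + 1)).integrableOn,
          setIntegral_condExp (ℱ.le n) (hint (n + 1)) (hCmeas n)]
      have step3 : ∫ ω in C n, (1 - (B n ω / α + β)) ∂μ
          ≤ ∫ ω in C n, (1 - (μ[B (n + 1) | ℱ n]) ω) ∂μ := by
        have hBα : Integrable (fun ω => B n ω / α + β) μ :=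
          ((hint n).div_const α).add (integrable_const β)
        refine setIntegral_mono_ae ((integrable_const 1).sub hBα).integrableOn
          ((integrable_const 1).sub integrable_condExp).integrableOn ?_
        filter_upwards [hdrift n] with ω hω
        exact sub_le_sub_left hω 1
      have step4 : ∫ ω in C n, ((1 - β) * (1 - B n ω)) ∂μ
          ≤ ∫ ω in C n, (1 - (B n ω / α + β)) ∂μ := by
        refine setIntegral_mono ((hintN n).const_mul _).integrableOn
          ((integrable_const 1).sub (((hint n).div_const α).add (integrable_const β))).integrableOn
          fun ω => ?_
        have hB := hnn n ω
        have h1 : (α:ℝ)⁻¹ ≤ 1 - β := by rw [← one_div]; exact hinv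
        have h2 := mul_le_mul_of_nonneg_left h1 hB
        simp only
        rw [div_eq_mul_inv]
        nlinarith [h2]
      have step5 : (1 - β) * ((1 - γ) * (1 - β) ^ n) ≤ ∫ ω in C n, ((1 - β) * (1 - B n ω)) ∂μ := by
        rw [integral_const_mul]
        exact mul_le_mul_of_nonneg_left ih (by linarith)
      calc (1 - γ) * (1 - β) ^ (n + 1) = (1 - β) * ((1 - γ) * (1 - β) ^ n) := by ring
        _ ≤ _ := le_trans step5 (le_trans step4 (le_trans step3 (step2.le.trans step1)))
  -- From the key bound, bound the measure of C N from below
  have hc0 : 0 ≤ (1 - γ) * (1 - β) ^ N := mul_nonneg (by linarith) (pow_nonneg (by linarith) N)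
  have hmeasC : ENNReal.ofReal ((1 - γ) * (1 - β) ^ N) ≤ μ (C N) := by
    have h1 : ∫ ω in C N, (1 - B N ω) ∂μ ≤ ∫ _ in C N, (1:ℝ) ∂μ := by
      refine setIntegral_mono_on (hintN N).integrableOn (integrable_const 1).integrableOn
        (hCm0 N) fun ω _ => ?_
      have := hnn N ω; linarith
    rw [setIntegral_const] at h1
    simp only [smul_eq_mul, mul_one] at h1
    calc ENNReal.ofReal ((1 - γ) * (1 - β) ^ N) ≤ ENNReal.ofReal ((μ (C N)).toReal) :=
          ENNReal.ofReal_le_ofReal (le_trans (key N) h1)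
      _ ≤ μ (C N) := ENNReal.ofReal_toReal_le
  -- Final step
  have hset : {ω | ∃ k ≤ N, 1 ≤ B k ω} = (C N)ᶜ := by
    ext ω
    simp only [hC, Set.mem_compl_iff, Set.mem_setOf_eq, not_forall, not_lt, exists_prop]
  rw [hset, measure_compl (hCm0 N) (measure_ne_top μ _), measure_univ]
  calc (1:ℝ≥0∞) - μ (C N) ≤ 1 - ENNReal.ofReal ((1 - γ) * (1 - β) ^ N) :=
        tsub_le_tsub_left hmeasC 1
    _ = ENNReal.ofReal (1 - (1 - γ) * (1 - β) ^ N) := by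
        rw [← ENNReal.ofReal_one, ← ENNReal.ofReal_sub _ hc0]
end

section
/- Let (B_k) be a nonnegative process with B_0 ≤ γ a.s. and E[B_{k+1}|F_k] ≤ B_k/α̃ + β̃ a.s., where α̃ > 1, 0 ≤ β̃ < 1, and β̃α̃/(α̃−1) > 1. Then P(max_{0≤k≤N} B_k ≥ 1) ≤ γ·α̃^{−N} + (1 − α̃^{−N})·α̃β̃/(α̃−1). -/
open MeasureTheory

/-- Kushner-type discrete-time bound, case `βα/(α-1) > 1`. -/
theorem kushner_discrete_bound_case2
    {Ω : Type*} {m0 : MeasurableSpace Ω} (μ : Measure Ω) [IsProbabilityMeasure μ]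
    (ℱ : Filtration ℕ m0) (B : ℕ → Ω → ℝ)
    (hadp : Adapted ℱ B) (hint : ∀ k, Integrable (B k) μ)
    (hnn : ∀ k ω, 0 ≤ B k ω)
    (γ α β : ℝ) (hγ0 : 0 ≤ γ) (hγ1 : γ < 1)
    (hα : 1 < α) (hβ0 : 0 ≤ β) (hβ1 : β < 1)
    (hcase : 1 < β * α / (α - 1))
    (h0 : ∀ᵐ ω ∂μ, B 0 ω ≤ γ)
    (hdrift : ∀ k, μ[B (k + 1) | ℱ k] ≤ᵐ[μ] fun ω => B k ω / α + β)
    (N : ℕ) :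
    μ {ω | ∃ k ≤ N, 1 ≤ B k ω}
      ≤ ENNReal.ofReal (γ * (1 / α) ^ N + (1 - (1 / α) ^ N) * α * β / (α - 1)) := by
  have hα0 : (0:ℝ) < α := lt_trans one_pos hα
  have hα1 : (0:ℝ) < α - 1 := by linarith
  -- from the case assumption: 1 ≤ 1/α + β
  have hone : (1:ℝ) ≤ 1 / α + β := by
    have h := (lt_div_iff₀ hα1).mp hcase
    have hid : α * (1 / α) = 1 := by field_simp
    nlinarith [hid, h]
  -- the sets where the max has reached 1
  set A : ℕ → Set Ω := fun k => {ω | ∃ j ≤ k, 1 ≤ B j ω} with hA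
  have hAmeasF : ∀ k, MeasurableSet[ℱ k] (A k) := by
    intro k
    have : A k = ⋃ j ∈ Finset.range (k+1), {ω | 1 ≤ B j ω} := by
      ext ω
      simp only [hA, Set.mem_setOf_eq, Set.mem_iUnion, Finset.mem_range, Nat.lt_succ_iff]
      tauto
    rw [this]
    refine MeasurableSet.biUnion (Finset.range (k+1)).countable_toSet ?_
    intro j hj
    have hj' : j ≤ k := Nat.lt_succ_iff.mp (Finset.mem_range.mp hj)
    exact ℱ.mono hj' _ (measurableSet_le measurable_const (hadp j))
  have hAmeas : ∀ k, MeasurableSet (A k) := fun k => ℱ.le k _ (hAmeasF k)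
  -- the truncated / stopped process
  set M : ℕ → Ω → ℝ := fun k => (A k).piecewise (fun _ => (1:ℝ)) (B k) with hM
  have hMnn : ∀ k ω, 0 ≤ M k ω := by
    intro k ω
    by_cases h : ω ∈ A k
    · simp [hM, Set.piecewise, h]
    · simp [hM, Set.piecewise, h, hnn k ω]
  have hMmeas : ∀ k, Measurable (M k) := by
    intro k
    exact Measurable.piecewise (hAmeas k) measurable_const
      ((hadp k).mono (ℱ.le k) le_rfl)
  have hMint : ∀ k, Integrable (M k) μ := by
    intro k
    refine Integrable.mono' ((integrable_const (1:ℝ)).add (hint k))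
      (hMmeas k).aestronglyMeasurable (Filter.Eventually.of_forall fun ω => ?_)
    rw [Real.norm_eq_abs, abs_of_nonneg (hMnn k ω)]
    by_cases h : ω ∈ A k
    · simp [hM, Set.piecewise, h, hnn k ω]
    · simp only [hM, Set.piecewise, h, if_false, Pi.add_apply]
      linarith [hnn k ω]
  -- decomposition of M (k+1)
  have hMdecomp : ∀ k, M (k+1) = (A k).indicator (fun _ => (1:ℝ))
      + (A k)ᶜ.indicator (fun ω => min (B (k+1) ω) 1) := by
    intro k
    funext ω
    by_cases h : ω ∈ A k
    · have h' : ω ∈ A (k+1) := by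
        obtain ⟨j, hj, hb⟩ := h
        exact ⟨j, le_trans hj (Nat.le_succ k), hb⟩
      simp [hM, Set.piecewise, Set.indicator_of_mem h, h', h,
        Set.indicator_of_notMem (Set.notMem_compl_iff.mpr h)]
    · have hcomp : ω ∈ (A k)ᶜ := h
      by_cases h1 : (1:ℝ) ≤ B (k+1) ω
      · have h' : ω ∈ A (k+1) := ⟨k+1, le_rfl, h1⟩
        simp [hM, Set.piecewise, h', Set.indicator_of_notMem h,
          Set.indicator_of_mem hcomp, min_eq_right h1]
      · have h' : ω ∉ A (k+1) := by
          rintro ⟨j, hj, hb⟩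
          rcases Nat.lt_succ_iff_lt_or_eq.mp (Nat.lt_succ_of_le hj) with hj' | hj'
          · exact h ⟨j, Nat.lt_succ_iff.mp hj', hb⟩
          · exact h1 (hj' ▸ hb)
        simp [hM, Set.piecewise, h', Set.indicator_of_notMem h,
          Set.indicator_of_mem hcomp, min_eq_left (le_of_not_ge h1)]
  -- drift for M
  have hminint : ∀ k, Integrable (fun ω => min (B (k+1) ω) 1) μ := fun k =>
    ((hint (k+1)).inf (integrable_const 1)).congr (Filter.Eventually.of_forall fun ω => rfl)
  have hMdrift : ∀ k, μ[M (k+1) | ℱ k] ≤ᵐ[μ] fun ω => M k ω / α + β := by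
    intro k
    have hi1 : Integrable ((A k).indicator (fun _ => (1:ℝ))) μ :=
      (integrable_const (1:ℝ)).indicator (hAmeas k)
    have hi2 : Integrable ((A k)ᶜ.indicator (fun ω => min (B (k+1) ω) 1)) μ :=
      (hminint k).indicator (hAmeas k).compl
    have hadd := condExp_add (m := ℱ k) (μ := μ) hi1 hi2
    have hc1 := condExp_indicator (m := ℱ k) (μ := μ) (integrable_const (1:ℝ)) (hAmeasF k)
    have hc2 := condExp_indicator (m := ℱ k) (μ := μ) (hminint k) (hAmeasF k).compl
    have hconst := condExp_const (μ := μ) (ℱ.le k) (1:ℝ)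
    have hmono : μ[fun ω => min (B (k+1) ω) 1 | ℱ k] ≤ᵐ[μ] fun ω => B k ω / α + β := by
      refine (condExp_mono (hminint k) (hint (k+1))
        (Filter.Eventually.of_forall fun ω => min_le_left _ _)).trans (hdrift k)
    rw [hMdecomp k]
    filter_upwards [hadd, hc1, hc2, hmono] with ω hadd hc1 hc2 hmono
    rw [hadd]
    simp only [Pi.add_apply]
    rw [hc1, hc2]
    by_cases h : ω ∈ A k
    · rw [Set.indicator_of_mem h, Set.indicator_of_notMem (Set.notMem_compl_iff.mpr h)]
      have hMk : M k ω = 1 := Set.piecewise_eq_of_mem _ _ _ h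
      rw [hMk, hconst]
      simpa using hone
    · rw [Set.indicator_of_notMem h, Set.indicator_of_mem (Set.mem_compl h)]
      have hMk : M k ω = B k ω := Set.piecewise_eq_of_notMem _ _ _ h
      rw [hMk]
      simpa using hmono
  -- expectation recursion
  have hexp : ∀ k, ∫ ω, M (k+1) ω ∂μ ≤ (∫ ω, M k ω ∂μ) / α + β := by
    intro k
    have h1 : ∫ ω, M (k+1) ω ∂μ = ∫ ω, (μ[M (k+1) | ℱ k]) ω ∂μ :=
      (integral_condExp (ℱ.le k)).symm
    rw [h1]
    set g : Ω → ℝ := fun ω => M k ω / α + β with hg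
    have hgint : Integrable g μ := ((hMint k).div_const α).add (integrable_const β)
    have h2 : ∫ ω, (μ[M (k+1) | ℱ k]) ω ∂μ ≤ ∫ ω, g ω ∂μ :=
      integral_mono_ae integrable_condExp hgint (hMdrift k)
    refine h2.trans_eq ?_
    rw [hg]
    rw [integral_add ((hMint k).div_const α) (integrable_const β),
      integral_div, integral_const]
    simp
  -- E[M 0] ≤ γ
  have hexp0 : ∫ ω, M 0 ω ∂μ ≤ γ := by
    have : ∀ᵐ ω ∂μ, M 0 ω ≤ γ := by
      filter_upwards [h0] with ω hω
      by_cases h : ω ∈ A 0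
      · exfalso
        obtain ⟨j, hj, hb⟩ := h
        interval_cases j
        linarith
      · rw [hM]
        simpa [Set.piecewise_eq_of_notMem _ _ _ h] using hω
    calc ∫ ω, M 0 ω ∂μ ≤ ∫ _ω, γ ∂μ := integral_mono_ae (hMint 0) (integrable_const γ) this
      _ = γ := by simp
  -- induction
  have hkey : ∀ k, ∫ ω, M k ω ∂μ ≤ γ * (1/α)^k + β * ∑ j ∈ Finset.range k, (1/α)^j := by
    intro k
    induction k with
    | zero => simpa using hexp0
    | succ k ih =>
      have h1 := hexp k
      have h2 : (∫ ω, M k ω ∂μ) / α ≤ (γ * (1/α)^k + β * ∑ j ∈ Finset.range k, (1/α)^j) / α :=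
        div_le_div_of_nonneg_right ih hα0.le
      have h3 : (γ * (1/α)^k + β * ∑ j ∈ Finset.range k, (1/α)^j) / α + β
          = γ * (1/α)^(k+1) + β * ∑ j ∈ Finset.range (k+1), (1/α)^j := by
        rw [geom_sum_succ]
        set S := ∑ j ∈ Finset.range k, (1/α)^j
        ring
      linarith
  -- the probability bound
  have hindic : ∀ ω, (A N).indicator (fun _ => (1:ℝ)) ω ≤ M N ω := by
    intro ω
    by_cases h : ω ∈ A N
    · rw [Set.indicator_of_mem h]
      show (1:ℝ) ≤ (A N).piecewise (fun _ => (1:ℝ)) (B N) ω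
      rw [Set.piecewise_eq_of_mem _ _ _ h]
    · rw [Set.indicator_of_notMem h]
      exact hMnn N ω
  have hmeasreal : (μ (A N)).toReal ≤ ∫ ω, M N ω ∂μ := by
    have : (μ (A N)).toReal = ∫ ω, (A N).indicator (fun _ => (1:ℝ)) ω ∂μ := by
      rw [integral_indicator_const _ (hAmeas N)]
      simp
      rfl
    rw [this]
    exact integral_mono ((integrable_const (1:ℝ)).indicator (hAmeas N)) (hMint N)
      hindic
  have ht : (1:ℝ)/α ≠ 1 := by
    intro h; rw [div_eq_one_iff_eq (ne_of_gt hα0)] at h; linarith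
  have hd : (1:ℝ)/α - 1 ≠ 0 := sub_ne_zero.mpr ht
  have hfinal : (μ (A N)).toReal ≤ γ * (1/α)^N + (1 - (1/α)^N) * α * β / (α - 1) := by
    refine hmeasreal.trans ((hkey N).trans_eq ?_)
    congr 1
    have hq : ((1/α)^N - 1)/(1/α - 1) = (1 - (1/α)^N) * α / (α - 1) := by
      rw [div_eq_div_iff hd hα1.ne']
      field_simp
      ring
    rw [geom_sum_eq ht, hq]
    ring
  calc μ {ω | ∃ k ≤ N, 1 ≤ B k ω} = μ (A N) := rfl
    _ = ENNReal.ofReal ((μ (A N)).toReal) := by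
        rw [ENNReal.ofReal_toReal (measure_ne_top μ _)]
    _ ≤ _ := ENNReal.ofReal_le_ofReal hfinal
end
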